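/- arXiv:2111.15323 — 5 statements merged into one kernel-verified Lean document; each statement's English description precedes it below -/
import Mathlib

section
/- Let λ be a real number and μ a complex number with |μ| ≥ 1, and set s = λ·Re(μ)/|μ|². Then for all integers p and q, |p·s + q| ≤ |p·λ + q·μ|, where the right-hand side is the complex absolute value. -/
/-- The length of the slope `q/p` on the cusp torus, `|p·λ + q·μ|`, is bounded below by
`|p·s + q|` where `s = λ·Re(μ)/|μ|²` is the natural slope, provided `|μ| ≥ 1`. -/
theorem slope_length_lower_bound (lam : ℝ) (μ : ℂ) (hμ : 1 ≤ ‖μ‖)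
    (s : ℝ) (hs : s = lam * μ.re / (‖μ‖) ^ 2) :
    ∀ p q : ℤ, |(p : ℝ) * s + (q : ℝ)| ≤ ‖(p : ℂ) * (lam : ℂ) + (q : ℂ) * μ‖ := by
  intro p q
  set A := ‖μ‖ with hA
  have hApos : (0:ℝ) < A := lt_of_lt_of_le one_pos hμ
  set z : ℂ := (p : ℂ) * (lam : ℂ) + (q : ℂ) * μ with hz
  have hre : (z * (starRingEnd ℂ) μ).re = p * lam * μ.re + q * A ^ 2 := by
    have hsq : (A : ℝ) ^ 2 = μ.re ^ 2 + μ.im ^ 2 := by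
      rw [hA, Complex.sq_norm, Complex.normSq_apply]; ring
    simp [hz, Complex.add_re, Complex.mul_re, Complex.mul_im, hsq]
    ring
  have key : (p : ℝ) * s + q = (z * (starRingEnd ℂ) μ).re / A ^ 2 := by
    rw [hre, hs]
    field_simp
  rw [key]
  have h1 : |(z * (starRingEnd ℂ) μ).re| ≤ ‖z‖ * A := by
    calc |(z * (starRingEnd ℂ) μ).re| ≤ ‖z * (starRingEnd ℂ) μ‖ :=
          Complex.abs_re_le_norm _
      _ = ‖z‖ * A := by rw [norm_mul, Complex.norm_conj]
  rw [abs_div, abs_of_pos (by positivity : (0:ℝ) < A ^ 2), div_le_iff₀ (by positivity)]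
  calc |(z * (starRingEnd ℂ) μ).re| ≤ ‖z‖ * A := h1
    _ ≤ ‖z‖ * A * A := le_mul_of_one_le_right (mul_nonneg (norm_nonneg z) hApos.le) hμ
    _ = ‖z‖ * A ^ 2 := by ring
end

section
/- Let λ be a real number and μ a complex number with |μ| ≥ 1, and set s = λ·Re(μ)/|μ|². If p and q are integers with p ≠ 0 and |p·λ + q·μ| ≤ 6, then |q/p + s| ≤ 6/|p|. -/
/-- If a slope `q/p` has length `|p·λ + q·μ| ≤ 6` on the cusp torus, then `q/p` lies within
`6/|p|` of minus the natural slope `s = λ·Re(μ)/|μ|²`. -/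
theorem exceptional_slope_interval (lam : ℝ) (μ : ℂ) (hμ : 1 ≤ ‖μ‖)
    (s : ℝ) (hs : s = lam * μ.re / ‖μ‖ ^ 2)
    (p q : ℤ) (hp : p ≠ 0)
    (hlen : ‖(p : ℂ) * (lam : ℂ) + (q : ℂ) * μ‖ ≤ 6) :
    |(q : ℝ) / (p : ℝ) + s| ≤ 6 / |(p : ℝ)| := by
  have hApos : 0 < ‖μ‖ := lt_of_lt_of_le one_pos hμ
  have hA2 : (0:ℝ) < (‖μ‖)^2 := by positivity
  have hp' : (p:ℝ) ≠ 0 := Int.cast_ne_zero.mpr hp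
  set z : ℂ := (p : ℂ) * (lam : ℂ) + (q : ℂ) * μ with hz
  have h1 : ((q:ℝ) + p * s) * (‖μ‖)^2 = (z * (starRingEnd ℂ) μ).re := by
    subst hs
    have hsq : (‖μ‖)^2 = μ.re^2 + μ.im^2 := by
      rw [Complex.sq_norm, Complex.normSq_apply]; ring
    have hne : μ.re^2 + μ.im^2 ≠ 0 := by rw [← hsq]; positivity
    rw [hsq]
    simp [hz, Complex.mul_re, Complex.add_re, Complex.add_im, Complex.mul_im]
    field_simp
    ring
  have h2 : |(q:ℝ) + p * s| * (‖μ‖)^2 ≤ 6 * (‖μ‖)^2 := by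
    have : |(q:ℝ) + p * s| * (‖μ‖)^2 = |((q:ℝ) + p * s) * (‖μ‖)^2| := by
      rw [abs_mul, abs_of_pos hA2]
    rw [this, h1]
    calc |(z * (starRingEnd ℂ) μ).re| ≤ ‖z * (starRingEnd ℂ) μ‖ :=
          Complex.abs_re_le_norm _
      _ = ‖z‖ * ‖μ‖ := by rw [norm_mul, Complex.norm_conj]
      _ ≤ 6 * ‖μ‖ := by
          exact mul_le_mul_of_nonneg_right hlen (norm_nonneg _)
      _ ≤ 6 * (‖μ‖)^2 := by nlinarith
  have key : |(q:ℝ) + p * s| ≤ 6 := le_of_mul_le_mul_right (by linarith) hA2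
  have heq : (q:ℝ) / p + s = ((q:ℝ) + p * s) / p := by field_simp
  rw [heq, abs_div]
  gcongr
end

section
/- There exists a unique function κ from pairs of positive integers to the rational numbers satisfying, for all positive integers p and q: (1) if p > 2q and q is odd, then κ(p,q) = κ(p-2q,q) - 1; (2) if p > 2q and q is even, then κ(p,q) = κ(p-2q,q); (3) if p = 2q, then κ(p,q) = -1; (4) if q ≤ p < 2q and q is odd, then κ(p,q) = -κ(q,2q-p) - 1; (5) if q ≤ p < 2q and q is even, then κ(p,q) = -κ(q,2q-p) - 2; (6) if p < q, then κ(p,q) = κ(q,p). -/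
private def F (p q : ℕ) : ℚ :=
  if q = 0 then 0
  else if h1 : p < q then F q p
  else if h2 : p = q then (if q % 2 = 1 then -1/2 else -1)
  else if h3 : p < 2*q then -F q (2*q - p) - (if q % 2 = 1 then 1 else 2)
  else if h4 : p = 2*q then -1
  else F (p - 2*q) q - (if q % 2 = 1 then 1 else 0)
termination_by 2*q + p
decreasing_by all_goals omega

private lemma F_lt {p q : ℕ} (h : p < q) : F p q = F q p := by
  rw [F, if_neg (by omega : ¬ q = 0), dif_pos h]

private lemma F_diag {q : ℕ} (hq : 1 ≤ q) :
    F q q = if q % 2 = 1 then -1/2 else -1 := by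
  rw [F, if_neg (by omega : ¬ q = 0), dif_neg (by omega : ¬ q < q), dif_pos rfl]

private lemma F_mid {p q : ℕ} (h1 : q < p) (h2 : p < 2*q) :
    F p q = -F q (2*q - p) - (if q % 2 = 1 then 1 else 2) := by
  rw [F, if_neg (by omega : ¬ q = 0), dif_neg (by omega : ¬ p < q),
    dif_neg (by omega : ¬ p = q), dif_pos h2]

private lemma F_two {q : ℕ} (hq : 1 ≤ q) : F (2*q) q = -1 := by
  rw [F, if_neg (by omega : ¬ q = 0), dif_neg (by omega : ¬ 2*q < q),
    dif_neg (by omega : ¬ 2*q = q), dif_neg (by omega : ¬ 2*q < 2*q), dif_pos rfl]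

private lemma F_big {p q : ℕ} (hq : 1 ≤ q) (hp : 2*q < p) :
    F p q = F (p - 2*q) q - (if q % 2 = 1 then 1 else 0) := by
  rw [F, if_neg (by omega : ¬ q = 0), dif_neg (by omega : ¬ p < q),
    dif_neg (by omega : ¬ p = q), dif_neg (by omega : ¬ p < 2*q),
    dif_neg (by omega : ¬ p = 2*q)]

private def K : ℕ+ → ℕ+ → ℚ := fun p q => F p q

private lemma K1 : ∀ q r : ℕ+, Odd (q : ℕ) → K (r + 2 * q) q = K r q - 1 := by
  intro q r ho
  have hqm : (q:ℕ) % 2 = 1 := Nat.odd_iff.mp ho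
  have hc : ((r + 2 * q : ℕ+) : ℕ) = (r:ℕ) + 2 * q := by push_cast; ring
  have hq1 : 1 ≤ (q:ℕ) := q.2
  have hr1 : 1 ≤ (r:ℕ) := r.2
  unfold K
  rw [hc, F_big hq1 (by omega), if_pos hqm, Nat.add_sub_cancel]

private lemma K2 : ∀ q r : ℕ+, Even (q : ℕ) → K (r + 2 * q) q = K r q := by
  intro q r he
  have hqm : (q:ℕ) % 2 = 0 := Nat.even_iff.mp he
  have hc : ((r + 2 * q : ℕ+) : ℕ) = (r:ℕ) + 2 * q := by push_cast; ring
  have hq1 : 1 ≤ (q:ℕ) := q.2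
  have hr1 : 1 ≤ (r:ℕ) := r.2
  unfold K
  rw [hc, F_big hq1 (by omega), if_neg (by omega), Nat.add_sub_cancel]
  ring

private lemma K3 : ∀ q : ℕ+, K (2 * q) q = -1 := by
  intro q
  have hc : ((2 * q : ℕ+) : ℕ) = 2 * (q:ℕ) := by push_cast; ring
  have hq1 : 1 ≤ (q:ℕ) := q.2
  unfold K
  rw [hc, F_two hq1]

private lemma K45 (p q r : ℕ+) (hle : q ≤ p) (hpr : p + r = 2 * q) :
    K p q = -K q r - (if (q:ℕ) % 2 = 1 then 1 else 2) := by
  have hle' : (q:ℕ) ≤ p := hle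
  have hpr' : (p:ℕ) + r = 2 * q := by
    have := congrArg (fun x : ℕ+ => (x:ℕ)) hpr
    push_cast at this; linarith
  have hr1 : 1 ≤ (r:ℕ) := r.2
  have hq1 : 1 ≤ (q:ℕ) := q.2
  unfold K
  rcases eq_or_lt_of_le hle' with h | h
  · -- p = q, hence r = q
    have hrq : (r:ℕ) = q := by omega
    have hpq : (p:ℕ) = q := h.symm
    rw [hpq, hrq, F_diag hq1]
    rcases Nat.even_or_odd (q:ℕ) with he | ho
    · rw [if_neg (by have := Nat.even_iff.mp he; omega), if_neg (by have := Nat.even_iff.mp he; omega)]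
      norm_num
    · rw [if_pos (Nat.odd_iff.mp ho), if_pos (Nat.odd_iff.mp ho)]
      norm_num
  · rw [F_mid h (by omega)]
    have : 2 * (q:ℕ) - p = r := Nat.sub_eq_of_eq_add (by omega)
    rw [this]

private lemma K6 : ∀ p q : ℕ+, p < q → K p q = K q p := by
  intro p q h
  exact F_lt (by exact_mod_cast h)

/-- There is a unique function `κ` on pairs of positive integers, with rational values,
satisfying the recursion defining the signature correction term:
(1) if `p > 2q` and `q` is odd, then `κ(p,q) = κ(p-2q,q) - 1`
    (encoded as `κ(r+2q,q) = κ(r,q) - 1` for `r ≥ 1`);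
(2) if `p > 2q` and `q` is even, then `κ(p,q) = κ(p-2q,q)`;
(3) if `p = 2q`, then `κ(p,q) = -1`;
(4) if `q ≤ p < 2q` and `q` is odd, then `κ(p,q) = -κ(q,2q-p) - 1`
    (encoded via `p + r = 2q` with `r ≥ 1`, so `r = 2q - p`);
(5) if `q ≤ p < 2q` and `q` is even, then `κ(p,q) = -κ(q,2q-p) - 2`;
(6) if `p < q`, then `κ(p,q) = κ(q,p)`. -/
theorem kappa_exists_unique :
    ∃! κ : ℕ+ → ℕ+ → ℚ,
      (∀ q r : ℕ+, Odd (q : ℕ) → κ (r + 2 * q) q = κ r q - 1) ∧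
      (∀ q r : ℕ+, Even (q : ℕ) → κ (r + 2 * q) q = κ r q) ∧
      (∀ q : ℕ+, κ (2 * q) q = -1) ∧
      (∀ p q r : ℕ+, q ≤ p → p + r = 2 * q → Odd (q : ℕ) → κ p q = -κ q r - 1) ∧
      (∀ p q r : ℕ+, q ≤ p → p + r = 2 * q → Even (q : ℕ) → κ p q = -κ q r - 2) ∧
      (∀ p q : ℕ+, p < q → κ p q = κ q p) := by
  refine ⟨K, ⟨K1, K2, K3, ?_, ?_, K6⟩, ?_⟩
  · intro p q r hle hpr ho
    rw [K45 p q r hle hpr, if_pos (Nat.odd_iff.mp ho)]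
  · intro p q r hle hpr he
    rw [K45 p q r hle hpr, if_neg (by have := Nat.even_iff.mp he; omega)]
  · rintro g ⟨H1, H2, H3, H4, H5, H6⟩
    funext p q
    suffices h : ∀ n, ∀ p q : ℕ+, 2 * (q:ℕ) + p = n → g p q = K p q by
      exact h _ p q rfl
    intro n
    induction n using Nat.strong_induction_on with
    | _ n ih =>
      intro p q hn
      have hp1 : 1 ≤ (p:ℕ) := p.2
      have hq1 : 1 ≤ (q:ℕ) := q.2
      rcases lt_trichotomy (p:ℕ) (q:ℕ) with h | h | h
      · rw [H6 p q (by exact_mod_cast h), K6 p q (by exact_mod_cast h)]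
        exact ih _ (by omega) q p rfl
      · -- p = q
        have hpq : p = q := PNat.coe_injective h
        subst hpq
        have h2 : p + p = 2 * p := by apply PNat.coe_injective; push_cast; ring
        rcases Nat.even_or_odd (p:ℕ) with he | ho
        · have e1 := H5 p p p le_rfl h2 he
          have e2 := K45 p p p le_rfl h2
          rw [if_neg (by have := Nat.even_iff.mp he; omega)] at e2
          linarith
        · have e1 := H4 p p p le_rfl h2 ho
          have e2 := K45 p p p le_rfl h2
          rw [if_pos (Nat.odd_iff.mp ho)] at e2
          linarith
      · -- q < p
        rcases lt_trichotomy (p:ℕ) (2*(q:ℕ)) with h2 | h2 | h2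
        · -- q < p < 2q
          obtain ⟨r, hrc⟩ : ∃ r : ℕ+, (r:ℕ) + (p:ℕ) = 2*(q:ℕ) :=
            ⟨⟨2*(q:ℕ) - p, Nat.sub_pos_of_lt h2⟩, Nat.sub_add_cancel h2.le⟩
          have hr1 : 1 ≤ (r:ℕ) := r.2
          have hpr : p + r = 2 * q := by
            apply PNat.coe_injective
            push_cast
            omega
          have hihr : g q r = K q r := ih (2*(r:ℕ) + (q:ℕ)) (by omega) q r rfl
          rcases Nat.even_or_odd (q:ℕ) with he | ho
          · rw [H5 p q r (by exact_mod_cast h.le) hpr he,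
              K45 p q r (by exact_mod_cast h.le) hpr,
              if_neg (by have := Nat.even_iff.mp he; omega), hihr]
          · rw [H4 p q r (by exact_mod_cast h.le) hpr ho,
              K45 p q r (by exact_mod_cast h.le) hpr,
              if_pos (Nat.odd_iff.mp ho), hihr]
        · -- p = 2q
          have hpq : p = 2 * q := by
            apply PNat.coe_injective; push_cast; omega
          rw [hpq, H3 q, K3 q]
        · -- p > 2q
          obtain ⟨r, hrc⟩ : ∃ r : ℕ+, (r:ℕ) + 2*(q:ℕ) = (p:ℕ) :=
            ⟨⟨(p:ℕ) - 2*(q:ℕ), Nat.sub_pos_of_lt h2⟩, Nat.sub_add_cancel h2.le⟩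
          have hr1 : 1 ≤ (r:ℕ) := r.2
          have hihr : g r q = K r q := ih (2*(q:ℕ) + (r:ℕ)) (by omega) r q rfl
          have hpr : p = r + 2 * q := by
            apply PNat.coe_injective; push_cast; omega
          rcases Nat.even_or_odd (q:ℕ) with he | ho
          · rw [hpr, H2 q r he, K2 q r he, hihr]
          · rw [hpr, H1 q r ho, K1 q r ho, hihr]
end

section
/- Let Λ be a ℤ-lattice of full rank in ℂ, let L be the minimal norm of a nonzero element of Λ, and let A be the covolume of Λ. Then every nonzero class in the quotient group Λ/2Λ has a representative v ∈ Λ with ‖v‖ ≤ 3L/2 + A/L. -/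
open Complex MeasureTheory

private lemma covol_formula (Λ : Submodule ℤ ℂ) [DiscreteTopology Λ] [IsZLattice ℝ Λ]
    (b : Module.Basis (Fin 2) ℤ Λ) :
    ZLattice.covolume Λ = |(b 0 : ℂ).re * (b 1 : ℂ).im - (b 1 : ℂ).re * (b 0 : ℂ).im| := by
  let ec : (Fin 2 → ℝ) ≃L[ℝ] ℂ := Complex.basisOneI.equivFun.toContinuousLinearEquiv.symm
  have he : MeasurePreserving ec volume volume := Complex.volume_preserving_equiv_pi.symm
  have h1 := ZLattice.covolume_comap Λ volume volume he
  rw [← h1]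
  rw [ZLattice.covolume_eq_det _ (b.ofZLatticeComap ℝ Λ ec.toLinearEquiv)]
  have hb : ∀ i, ((b.ofZLatticeComap ℝ Λ ec.toLinearEquiv i : Fin 2 → ℝ)) =
      ![(b i : ℂ).re, (b i : ℂ).im] := by
    intro i
    have : (b.ofZLatticeComap ℝ Λ ec.toLinearEquiv i : Fin 2 → ℝ)
        = ec.toLinearEquiv.symm (b i) := by
      rw [Module.Basis.ofZLatticeComap_apply]
    rw [this]
    rfl
  rw [show (Matrix.of ((↑) ∘ (b.ofZLatticeComap ℝ Λ ec.toLinearEquiv))) =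
      Matrix.of ![![(b 0 : ℂ).re, (b 0 : ℂ).im], ![(b 1 : ℂ).re, (b 1 : ℂ).im]] from ?_]
  · rw [Matrix.det_fin_two]
    simp [Matrix.of_apply]
    ring_nf
  · ext i j
    fin_cases i <;> simp [hb]

private lemma core_lemma (Λ : Submodule ℤ ℂ) (L A : ℝ) (hLpos : 0 < L) (hApos : 0 ≤ A)
    (e₁ e₂ : ℂ) (he₁ : e₁ ∈ Λ) (he₂ : e₂ ∈ Λ) (he₁L : ‖e₁‖ = L)
    (hY : |((starRingEnd ℂ) e₁ * e₂).im| = A)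
    (w : ℂ) (a bb : ℤ) (hw : w = (a : ℂ) * e₁ + (bb : ℂ) * e₂) :
    ∃ v ∈ Λ, (∃ u ∈ Λ, v - w = 2 * u) ∧ ‖v‖ ≤ 3 * L / 2 + A / L := by
  set X : ℝ := ((starRingEnd ℂ) e₁ * e₂).re with hX
  set Y : ℝ := ((starRingEnd ℂ) e₁ * e₂).im with hYdef
  set b' : ℤ := bb % 2 with hb'
  set m₂ : ℤ := bb / 2 with hm₂
  have hbb : bb = 2 * m₂ + b' := (Int.mul_ediv_add_emod bb 2).symm
  set R₀ : ℝ := (a : ℝ) * L ^ 2 + (b' : ℝ) * X with hR₀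
  set m₁ : ℤ := round (R₀ / (2 * L ^ 2)) with hm₁
  set a' : ℤ := a - 2 * m₁ with ha'
  set v : ℂ := (a' : ℂ) * e₁ + (b' : ℂ) * e₂ with hv
  have hvΛ : v ∈ Λ := by
    apply Λ.add_mem
    · have := Λ.smul_mem a' he₁; rwa [zsmul_eq_mul] at this
    · have := Λ.smul_mem b' he₂; rwa [zsmul_eq_mul] at this
  refine ⟨v, hvΛ, ⟨((-m₁ : ℤ) : ℂ) * e₁ + ((-m₂ : ℤ) : ℂ) * e₂, ?_, ?_⟩, ?_⟩
  · apply Λ.add_mem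
    · have := Λ.smul_mem (-m₁) he₁; rwa [zsmul_eq_mul] at this
    · have := Λ.smul_mem (-m₂) he₂; rwa [zsmul_eq_mul] at this
  · rw [hv, hw, ha']
    have hbbC : (bb : ℂ) = 2 * (m₂ : ℂ) + (b' : ℂ) := by
      exact_mod_cast congrArg (Int.cast : ℤ → ℂ) hbb
    rw [hbbC]; push_cast; ring
  · have hL2 : e₁.re ^ 2 + e₁.im ^ 2 = L ^ 2 := by
      have : Complex.normSq e₁ = L ^ 2 := by
        rw [Complex.normSq_eq_norm_sq, he₁L]
      rw [normSq_apply] at this; nlinarith [this]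
    have hre : ((starRingEnd ℂ) e₁ * v).re = (a' : ℝ) * L ^ 2 + (b' : ℝ) * X := by
      rw [hv, hX]
      simp only [mul_add, Complex.add_re, Complex.mul_re, Complex.mul_im,
        Complex.conj_re, Complex.conj_im, Complex.intCast_re, Complex.intCast_im]
      linear_combination (a' : ℝ) * hL2
    have him : ((starRingEnd ℂ) e₁ * v).im = (b' : ℝ) * Y := by
      rw [hv, hYdef]
      simp only [mul_add, Complex.add_im, Complex.mul_re, Complex.mul_im,
        Complex.conj_re, Complex.conj_im, Complex.intCast_re, Complex.intCast_im]
      ring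
    have hRval : (a' : ℝ) * L ^ 2 + (b' : ℝ) * X = R₀ - 2 * L ^ 2 * (m₁ : ℝ) := by
      rw [ha', hR₀]; push_cast; ring
    have hRbound : |(a' : ℝ) * L ^ 2 + (b' : ℝ) * X| ≤ L ^ 2 := by
      rw [hRval]
      have h2L : (0 : ℝ) < 2 * L ^ 2 := by positivity
      have hround := abs_sub_round (R₀ / (2 * L ^ 2))
      have heq : R₀ - 2 * L ^ 2 * (m₁ : ℝ)
          = (2 * L ^ 2) * (R₀ / (2 * L ^ 2) - round (R₀ / (2 * L ^ 2))) := by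
        field_simp
        rw [hm₁]
      rw [heq, abs_mul, abs_of_pos h2L]
      calc 2 * L ^ 2 * |R₀ / (2 * L ^ 2) - ↑(round (R₀ / (2 * L ^ 2)))|
          ≤ 2 * L ^ 2 * (1/2) := mul_le_mul_of_nonneg_left hround (le_of_lt h2L)
        _ = L ^ 2 := by ring
    have hb'01 : b' = 0 ∨ b' = 1 := Int.emod_two_eq_zero_or_one bb
    have hYb : |(b' : ℝ) * Y| ≤ A := by
      rcases hb'01 with h | h <;> rw [h] <;> simp [abs_mul, hY] <;> positivity
    have hnormv : L * ‖v‖ = ‖(starRingEnd ℂ) e₁ * v‖ := by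
      rw [norm_mul, RCLike.norm_conj, he₁L]
    have hnsqv : (L * ‖v‖) ^ 2 = ((a' : ℝ) * L ^ 2 + (b' : ℝ) * X) ^ 2 + ((b' : ℝ) * Y) ^ 2 := by
      rw [hnormv, ← hre, ← him, Complex.sq_norm, normSq_apply]; ring
    have hR2 : ((a' : ℝ) * L ^ 2 + (b' : ℝ) * X) ^ 2 ≤ (L ^ 2) ^ 2 :=
      sq_le_sq' (abs_le.mp hRbound).1 (abs_le.mp hRbound).2
    have hS2 : ((b' : ℝ) * Y) ^ 2 ≤ A ^ 2 :=
      sq_le_sq' (abs_le.mp hYb).1 (abs_le.mp hYb).2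
    have key : L * ‖v‖ ≤ L ^ 2 + A := by
      nlinarith [hnsqv, hR2, hS2, mul_nonneg (le_of_lt hLpos) (norm_nonneg v), hApos,
        sq_nonneg (L ^ 2 + A), sq_nonneg L]
    have hfin : ‖v‖ ≤ L + A / L := by
      rw [← mul_le_mul_iff_right₀ hLpos]
      calc L * ‖v‖ ≤ L ^ 2 + A := key
        _ = L * (L + A / L) := by field_simp
    nlinarith [hfin]

/-- For a full-rank `ℤ`-lattice `Λ` in `ℂ` with shortest nonzero vector of norm `L` and
covolume `A`, every nonzero class of `Λ/2Λ` has a representative of norm at most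
`3L/2 + A/L`: for every `w ∈ Λ` not of the form `2u` with `u ∈ Λ`, there exists `v ∈ Λ`
congruent to `w` modulo `2Λ` with `‖v‖ ≤ 3L/2 + A/L`. -/
theorem short_representative_mod_two (Λ : Submodule ℤ ℂ) [DiscreteTopology Λ] [IsZLattice ℝ Λ]
    (L : ℝ) (hL : IsLeast {r : ℝ | ∃ v ∈ Λ, v ≠ 0 ∧ ‖v‖ = r} L)
    (A : ℝ) (hA : A = ZLattice.covolume Λ) :
    ∀ w ∈ Λ, ¬ (∃ u ∈ Λ, w = 2 * u) →
      ∃ v ∈ Λ, (∃ u ∈ Λ, v - w = 2 * u) ∧ ‖v‖ ≤ 3 * L / 2 + A / L := by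
  intro w hw _
  obtain ⟨e₁, he₁Λ, he₁0, he₁L⟩ := hL.1
  have hLpos : 0 < L := by rw [← he₁L]; exact norm_pos_iff.mpr he₁0
  have hlb : ∀ z ∈ Λ, z ≠ 0 → L ≤ ‖z‖ := fun z hz h0 => hL.2 ⟨z, hz, h0, rfl⟩
  have hApos : 0 ≤ A := by rw [hA]; exact le_of_lt (ZLattice.covolume_pos Λ volume)
  have hrank : Module.finrank ℤ Λ = 2 := by
    rw [ZLattice.rank ℝ Λ, Complex.finrank_real_complex]
  let b : Module.Basis (Fin 2) ℤ Λ := (Module.finBasis ℤ Λ).reindex (finCongr hrank)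
  set z₀ : ℂ := (b 0 : ℂ) with hz₀def
  set z₁ : ℂ := (b 1 : ℂ) with hz₁def
  have hz₀ : z₀ ∈ Λ := (b 0).2
  have hz₁ : z₁ ∈ Λ := (b 1).2
  have hdecomp : ∀ x ∈ Λ, ∃ m n : ℤ, x = (m : ℂ) * z₀ + (n : ℂ) * z₁ := by
    intro x hx
    refine ⟨b.repr ⟨x, hx⟩ 0, b.repr ⟨x, hx⟩ 1, ?_⟩
    have h := congrArg (Submodule.subtype Λ) (b.sum_repr ⟨x, hx⟩)
    simp only [map_sum, map_smul, Fin.sum_univ_two, Submodule.subtype_apply, Submodule.coe_add,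
      Submodule.coe_smul, zsmul_eq_mul] at h
    exact h.symm
  -- write e₁ in the basis, show primitivity
  obtain ⟨p, q, hpq⟩ := hdecomp e₁ he₁Λ
  have hgcd : Int.gcd p q = 1 := by
    set g : ℕ := Int.gcd p q with hg
    have hg0 : g ≠ 0 := by
      intro h
      rw [hg] at h
      obtain ⟨hp, hq⟩ := Int.gcd_eq_zero_iff.mp h
      apply he₁0
      rw [hpq, hp, hq]; simp
    set u : ℂ := ((p / (g : ℤ) : ℤ) : ℂ) * z₀ + ((q / (g : ℤ) : ℤ) : ℂ) * z₁ with hu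
    have huΛ : u ∈ Λ := by
      apply Λ.add_mem
      · have := Λ.smul_mem (p / (g : ℤ)) hz₀; rwa [zsmul_eq_mul] at this
      · have := Λ.smul_mem (q / (g : ℤ)) hz₁; rwa [zsmul_eq_mul] at this
    have hgu : e₁ = ((g : ℤ) : ℂ) * u := by
      rw [hpq, hu]
      have h1 : ((g : ℤ) : ℂ) * ((p / (g : ℤ) : ℤ) : ℂ) = (p : ℂ) := by
        rw [← Int.cast_mul, Int.mul_ediv_cancel' (Int.gcd_dvd_left _ _)]
      have h2 : ((g : ℤ) : ℂ) * ((q / (g : ℤ) : ℤ) : ℂ) = (q : ℂ) := by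
        rw [← Int.cast_mul, Int.mul_ediv_cancel' (Int.gcd_dvd_right _ _)]
      rw [mul_add, ← mul_assoc, ← mul_assoc, h1, h2]
    have hu0 : u ≠ 0 := by
      intro h; apply he₁0; rw [hgu, h, mul_zero]
    have hLu : L ≤ ‖u‖ := hlb u huΛ hu0
    have hnorm : L = (g : ℝ) * ‖u‖ := by
      rw [← he₁L, hgu, norm_mul]; norm_num
    by_contra hne
    have hg2 : 2 ≤ (g : ℝ) := by
      have : 2 ≤ g := by omega
      exact_mod_cast this
    nlinarith [norm_nonneg u]
  -- Bezout : p * s - q * r = 1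
  set s : ℤ := Int.gcdA p q with hs
  set r : ℤ := -Int.gcdB p q with hr
  have hbez : p * s - q * r = 1 := by
    have h := Int.gcd_eq_gcd_ab p q
    rw [hgcd] at h
    push_cast at h
    linear_combination -h
  set e₂ : ℂ := (r : ℂ) * z₀ + (s : ℂ) * z₁ with he₂def
  have he₂Λ : e₂ ∈ Λ := by
    apply Λ.add_mem
    · have := Λ.smul_mem r hz₀; rwa [zsmul_eq_mul] at this
    · have := Λ.smul_mem s hz₁; rwa [zsmul_eq_mul] at this
  -- area identity
  have hbezR : (p : ℝ) * s - q * r = 1 := by exact_mod_cast hbez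
  have hYval : ((starRingEnd ℂ) e₁ * e₂).im = z₀.re * z₁.im - z₁.re * z₀.im := by
    rw [hpq, he₂def]
    simp only [map_add, map_mul, Complex.add_im, Complex.mul_re, Complex.mul_im,
      Complex.conj_re, Complex.conj_im, Complex.intCast_re, Complex.intCast_im,
      Complex.add_re]
    linear_combination (z₀.re * z₁.im - z₁.re * z₀.im) * hbezR
  have hY : |((starRingEnd ℂ) e₁ * e₂).im| = A := by
    rw [hYval, hA, covol_formula Λ b]
  -- decompose w in terms of e₁, e₂
  obtain ⟨m, n, hmn⟩ := hdecomp w hw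
  have hbezC : (p : ℂ) * s - q * r = 1 := by exact_mod_cast hbez
  have hwdec : w = ((s * m - r * n : ℤ) : ℂ) * e₁ + ((-q * m + p * n : ℤ) : ℂ) * e₂ := by
    rw [hpq, he₂def, hmn]
    push_cast
    linear_combination (-(m : ℂ) * z₀ - (n : ℂ) * z₁) * hbezC
  exact core_lemma Λ L A hLpos hApos e₁ e₂ he₁Λ he₂Λ he₁L hY w _ _ hwdec
end

section
/- Let λ be a positive real number and μ a complex number with Im(μ) > 0, 1 ≤ |μ| ≤ 6, and λ·Im(μ) ≥ 3.35. Set s = λ·Re(μ)/|μ|², and let n be a real number with |n - s| ≤ 1. Then λ·Im(μ) ≥ 0.55·|λ - n·μ|. -/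
set_option maxHeartbeats 1000000 in
/-- Let `λ > 0` be the longitudinal translation and `μ` the meridional translation of the cusp
torus, with `Im(μ) > 0`, `1 ≤ |μ| ≤ 6`, and area `λ·Im(μ) ≥ 3.35`. If `n` is within `1` of the
natural slope `s = λ·Re(μ)/|μ|²`, then `λ·Im(μ) ≥ 0.55·|λ - n·μ|`. -/
theorem cusp_height_bound (lam : ℝ) (hlam : 0 < lam) (μ : ℂ) (hμim : 0 < μ.im)
    (hμ1 : 1 ≤ ‖μ‖) (hμ6 : ‖μ‖ ≤ 6)
    (harea : lam * μ.im ≥ 3.35)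
    (s : ℝ) (hs : s = lam * μ.re / ‖μ‖ ^ 2)
    (n : ℝ) (hn : |n - s| ≤ 1) :
    lam * μ.im ≥ 0.55 * ‖(lam : ℂ) - (n : ℂ) * μ‖ := by
  set m : ℝ := ‖μ‖ ^ 2 with hmdef
  have hm0 : (0:ℝ) < m := by positivity
  have hm : m = μ.re ^ 2 + μ.im ^ 2 := by
    rw [hmdef, Complex.sq_norm, Complex.normSq_apply]; ring
  have hm1 : (1:ℝ) ≤ m := by
    rw [hmdef]; nlinarith [hμ1]
  have hm36 : m ≤ 36 := by
    rw [hmdef]; nlinarith [norm_nonneg μ, hμ6]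
  have hsm : s * m = lam * μ.re := by
    rw [hs]; field_simp
  set N : ℝ := ‖(lam : ℂ) - (n : ℂ) * μ‖ with hNdef
  have hN0 : 0 ≤ N := norm_nonneg _
  have hN : N ^ 2 = (lam - n * μ.re) ^ 2 + (n * μ.im) ^ 2 := by
    rw [hNdef, Complex.sq_norm, Complex.normSq_apply]
    simp [Complex.sub_re, Complex.sub_im, Complex.mul_re, Complex.mul_im]
    ring
  clear_value m N
  have key : N ^ 2 * m = (n - s) ^ 2 * m ^ 2 + (lam * μ.im) ^ 2 := by
    linear_combination m * hN + (2 * n * m - s * m - lam * μ.re) * hsm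
      + (lam ^ 2 - n ^ 2 * m) * hm
  have ht : (n - s) ^ 2 ≤ 1 := by
    have := abs_le.mp hn
    nlinarith [this.1, this.2]
  have hA : (3.35:ℝ) ≤ lam * μ.im := harea
  have hA2 : (11.2225:ℝ) ≤ (lam * μ.im) ^ 2 := by nlinarith
  have h2 : N ^ 2 * m ≤ m ^ 2 + (lam * μ.im) ^ 2 := by
    nlinarith [key, mul_le_mul_of_nonneg_right ht (sq_nonneg m)]
  have h3 : (lam * μ.im) ^ 2 * m - 0.3025 * m ^ 2 - 0.3025 * (lam * μ.im) ^ 2 ≥ 0 := by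
    nlinarith [mul_nonneg (by linarith : (0:ℝ) ≤ (lam * μ.im) ^ 2 - 11.2225)
        (by linarith : (0:ℝ) ≤ m - 0.3025),
      mul_nonneg (sub_nonneg.mpr hm1) (sub_nonneg.mpr hm36)]
  have h4 : (0.3025 * N ^ 2) * m ≤ (lam * μ.im) ^ 2 * m := by linarith [h2, h3]
  have hsq : (lam * μ.im) ^ 2 ≥ 0.3025 * N ^ 2 := le_of_mul_le_mul_right h4 hm0
  nlinarith [hsq, hN0, hA]
end
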